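/- The partial products ∏_{n=1}^{N} [((4n-1)(2n+1)) / ((4n+1)(2n-1))]^{u_n} converge as N → ∞ to 1/2. -/

import Mathlib

open Filter Finset Topology

/-- The Thue–Morse sequence with values `±1`: `u n = (-1)^(s₂ n)` where `s₂ n`
is the sum of the binary digits of `n`. -/
def u (n : ℕ) : ℤ := (-1) ^ (Nat.digits 2 n).sum

lemma u_zero : u 0 = 1 := by simp [u]

lemma u_two_mul (n : ℕ) : u (2 * n) = u n := by
  rcases Nat.eq_zero_or_pos n with h | h
  · simp [h]
  · rw [u, u, Nat.digits_def' (by norm_num : 1 < 2) (by omega)]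
    simp [Nat.mul_div_cancel_left, Nat.mul_mod_right]

lemma u_two_mul_add_one (n : ℕ) : u (2 * n + 1) = -u n := by
  rw [u, u, Nat.digits_def' (by norm_num : 1 < 2) (by omega)]
  have h1 : (2 * n + 1) % 2 = 1 := by omega
  have h2 : (2 * n + 1) / 2 = n := by omega
  rw [h1, h2]
  simp [pow_add, pow_succ]

lemma u_eq_or (n : ℕ) : u n = 1 ∨ u n = -1 := by
  rcases Nat.even_or_odd ((Nat.digits 2 n).sum) with h | h
  · left; exact Even.neg_one_pow h
  · right; exact Odd.neg_one_pow h


lemma u_one : u 1 = -1 := by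
  have := u_two_mul_add_one 0
  simpa [u_zero] using this

lemma abs_u (n : ℕ) : |((u n : ℤ) : ℝ)| = 1 := by
  rcases u_eq_or n with h | h <;> rw [h] <;> norm_num

lemma abs_log_le {x : ℝ} (hx : 0 < x) (h1 : |x - 1| ≤ 1/2) :
    |Real.log x| ≤ 2 * |x - 1| := by
  rcases le_or_gt 1 x with h | h
  · rw [abs_of_nonneg (Real.log_nonneg h), abs_of_nonneg (by linarith)]
    have := Real.log_le_sub_one_of_pos hx
    linarith
  · have hx2 : 1/2 ≤ x := by
      rcases abs_le.1 h1 with ⟨h2, _⟩; linarith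
    have hlog : Real.log x < 0 := Real.log_neg hx (by linarith)
    rw [abs_of_neg hlog, abs_of_neg (by linarith : x - 1 < 0)]
    have h3 := Real.log_le_sub_one_of_pos (inv_pos.2 hx)
    rw [Real.log_inv] at h3
    have h4 : x⁻¹ - 1 ≤ 2 * (1 - x) := by
      rw [inv_eq_one_div]
      rw [div_sub' (ne_of_gt hx), div_le_iff₀ (by linarith)]
      nlinarith
    linarith

lemma tendsto_half : Tendsto (fun N : ℕ => N / 2) atTop atTop :=
  tendsto_atTop_atTop.2 (fun b => ⟨2*b, fun n hn => by omega⟩)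

/-- Core convergence lemma for Thue–Morse weighted products. -/
lemma core_conv (h : ℕ → ℝ) (hpos : ∀ n, 0 < h n)
    (htend : Tendsto (fun n => Real.log (h n)) atTop (𝓝 0))
    (hsum : Summable (fun m => |Real.log (h (2*m)) - Real.log (h (2*m+1))|)) :
    ∃ L : ℝ, 0 < L ∧
      Tendsto (fun N => ∏ n ∈ range N, h n ^ (u n)) atTop (𝓝 L) := by
  set c : ℕ → ℝ := fun n => ((u n : ℤ) : ℝ) * Real.log (h n) with hc
  have hprod : ∀ N, ∏ n ∈ range N, h n ^ (u n) = Real.exp (∑ n ∈ range N, c n) := by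
    intro N
    rw [Real.exp_sum]
    refine Finset.prod_congr rfl (fun n _ => ?_)
    rw [← Real.rpow_intCast (h n) (u n), Real.rpow_def_of_pos (hpos n), mul_comm]
  set d : ℕ → ℝ := fun m => c (2*m) + c (2*m+1) with hd
  have hdm : ∀ m, d m = ((u m : ℤ) : ℝ) * (Real.log (h (2*m)) - Real.log (h (2*m+1))) := by
    intro m
    simp only [hd, hc, u_two_mul, u_two_mul_add_one]
    push_cast
    ring
  have hsumd : Summable d := by
    apply Summable.of_norm
    refine Summable.of_nonneg_of_le (fun m => norm_nonneg _) (fun m => ?_) hsum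
    rw [hdm m, norm_mul, Real.norm_eq_abs, Real.norm_eq_abs, abs_u]
    simp
  set T := ∑' m, d m with hT
  have htendd : Tendsto (fun M => ∑ m ∈ range M, d m) atTop (𝓝 T) :=
    hsumd.hasSum.tendsto_sum_nat
  have hsplit : ∀ N, ∑ n ∈ range N, c n
      = (∑ m ∈ range (N/2), d m) + (if N % 2 = 1 then c (2*(N/2)) else 0) := by
    have key : ∀ M, ∑ n ∈ range (2*M), c n = ∑ m ∈ range M, d m := by
      intro M
      induction M with
      | zero => simp
      | succ M ih =>
        rw [show 2*(M+1) = (2*M+1)+1 by ring, Finset.sum_range_succ, Finset.sum_range_succ,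
          ih, Finset.sum_range_succ]
        simp only [hd]
        ring
    intro N
    rcases Nat.even_or_odd N with ⟨k, hk⟩ | ⟨k, hk⟩
    · subst hk
      rw [show k + k = 2*k by ring]
      simp [key k, Nat.mul_div_cancel_left, Nat.mul_mod_right]
    · subst hk
      have h1 : (2*k+1) / 2 = k := by omega
      have h2 : (2*k+1) % 2 = 1 := by omega
      rw [h1, h2, Finset.sum_range_succ, key k]
      simp
  have habsc : ∀ n, |c n| = |Real.log (h n)| := by
    intro n; rw [hc]; simp only []
    rw [abs_mul, abs_u, one_mul]
  have hlogabs : Tendsto (fun n : ℕ => |Real.log (h n)|) atTop (𝓝 0) := by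
    have := htend.abs; rwa [abs_zero] at this
  have h2 : Tendsto (fun N : ℕ => 2*(N/2)) atTop atTop :=
    tendsto_atTop_atTop.2 (fun b => ⟨2*b, fun n hn => by omega⟩)
  have hc20 : Tendsto (fun N : ℕ => c (2*(N/2))) atTop (𝓝 0) := by
    refine squeeze_zero_norm (fun N => ?_) (hlogabs.comp h2)
    rw [Real.norm_eq_abs, habsc]
    simp [Function.comp]
  have hiftend : Tendsto (fun N : ℕ => if N % 2 = 1 then c (2*(N/2)) else 0) atTop (𝓝 0) := by
    have habs0 : Tendsto (fun N : ℕ => |c (2*(N/2))|) atTop (𝓝 0) := by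
      have := hc20.abs; rwa [abs_zero] at this
    refine squeeze_zero_norm (fun N => ?_) habs0
    by_cases hN : N % 2 = 1 <;> simp [hN, abs_nonneg]
  have hFtend : Tendsto (fun N => ∑ n ∈ range N, c n) atTop (𝓝 T) := by
    have h4 : Tendsto (fun N : ℕ => ∑ m ∈ range (N/2), d m) atTop (𝓝 T) :=
      htendd.comp tendsto_half
    have h5 := h4.add hiftend
    rw [add_zero] at h5
    refine h5.congr (fun N => ?_)
    exact (hsplit N).symm
  refine ⟨Real.exp T, Real.exp_pos T, ?_⟩
  have := (Real.continuous_exp.tendsto T).comp hFtend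
  refine this.congr (fun N => ?_)
  exact (hprod N).symm

lemma lin_ratio (a b c : ℝ) (ha : 0 < a) :
    Tendsto (fun n : ℕ => (a*n+b)/(a*n+c)) atTop (𝓝 1) := by
  have hden : Tendsto (fun n : ℕ => a*(n:ℝ)+c) atTop atTop := by
    apply Filter.tendsto_atTop_add_const_right
    exact Tendsto.const_mul_atTop ha tendsto_natCast_atTop_atTop
  have h0 : Tendsto (fun n : ℕ => (b - c)/(a*(n:ℝ)+c)) atTop (𝓝 0) :=
    Tendsto.div_atTop tendsto_const_nhds hden
  have h1 : Tendsto (fun n : ℕ => 1 + (b - c)/(a*(n:ℝ)+c)) atTop (𝓝 1) := by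
    have hco : Tendsto (fun _ : ℕ => (1:ℝ)) atTop (𝓝 1) := tendsto_const_nhds
    have := hco.add h0
    rwa [add_zero] at this
  refine h1.congr' ?_
  filter_upwards [hden.eventually_gt_atTop 0] with n hn
  have : a*(n:ℝ)+c ≠ 0 := ne_of_gt hn
  field_simp
  ring

lemma log_tendsto_zero {h : ℕ → ℝ} (ht : Tendsto h atTop (𝓝 1)) :
    Tendsto (fun n => Real.log (h n)) atTop (𝓝 0) := by
  have := ((Real.continuousAt_log one_ne_zero).tendsto).comp ht
  rwa [Real.log_one] at this

lemma summable_logdiff (h : ℕ → ℝ) (hpos : ∀ n, 0 < h n)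
    (hb : ∀ m : ℕ, 1 ≤ m → |h (2*m) / h (2*m+1) - 1| ≤ 1/(2*(m:ℝ)^2)) :
    Summable (fun m => |Real.log (h (2*m)) - Real.log (h (2*m+1))|) := by
  rw [← summable_nat_add_iff 1]
  have hsum2 : Summable (fun m : ℕ => 1/((m:ℝ)+1)^2) := by
    have h1 : Summable (fun m : ℕ => 1/(m:ℝ)^2) :=
      Real.summable_one_div_nat_pow.2 one_lt_two
    have h2 := (summable_nat_add_iff 1).2 h1
    refine h2.congr (fun m => ?_)
    push_cast
    ring
  refine Summable.of_nonneg_of_le (fun m => abs_nonneg _) (fun m => ?_) hsum2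
  have hm1 : 1 ≤ m + 1 := by omega
  have hb1 := hb (m+1) hm1
  have hmpos : (0:ℝ) < ((m:ℝ)+1) := by positivity
  have hratio : (0:ℝ) < h (2*(m+1)) / h (2*(m+1)+1) :=
    div_pos (hpos _) (hpos _)
  have hhalf : |h (2*(m+1)) / h (2*(m+1)+1) - 1| ≤ 1/2 := by
    refine hb1.trans ?_
    push_cast
    rw [div_le_div_iff₀ (by positivity) (by norm_num)]
    nlinarith [Nat.cast_nonneg (α := ℝ) m]
  have hlog : Real.log (h (2*(m+1))) - Real.log (h (2*(m+1)+1))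
      = Real.log (h (2*(m+1)) / h (2*(m+1)+1)) := by
    rw [Real.log_div (ne_of_gt (hpos _)) (ne_of_gt (hpos _))]
  rw [hlog]
  calc |Real.log (h (2*(m+1)) / h (2*(m+1)+1))|
      ≤ 2 * |h (2*(m+1)) / h (2*(m+1)+1) - 1| := abs_log_le hratio hhalf
    _ ≤ 2 * (1/(2*((m+1:ℕ):ℝ)^2)) := by
        have := hb1
        push_cast at this ⊢
        linarith
    _ = 1/((m:ℝ)+1)^2 := by
        push_cast
        rw [eq_div_iff (by positivity)]
        field_simp

noncomputable def Wp (N : ℕ) : ℝ := ∏ n ∈ range N, ((2*(n:ℝ)+1)/(2*(n:ℝ)+2)) ^ (u n)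
noncomputable def Xp (N : ℕ) : ℝ := ∏ n ∈ Ico 1 N, ((2*(n:ℝ))/(2*(n:ℝ)+1)) ^ (u n)
noncomputable def Ap (N : ℕ) : ℝ := ∏ n ∈ Icc 1 N, ((2*(n:ℝ)-1)/(2*(n:ℝ)+1)) ^ (u n)
noncomputable def Bp (N : ℕ) : ℝ := ∏ n ∈ Icc 1 N, ((4*(n:ℝ)-1)/(4*(n:ℝ)+1)) ^ (u n)
noncomputable def Cp (N : ℕ) : ℝ := ∏ n ∈ range N, ((4*(n:ℝ)+1)/(4*(n:ℝ)+3)) ^ (u n)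

lemma Wp_succ (N : ℕ) : Wp (N+1) = Wp N * ((2*(N:ℝ)+1)/(2*(N:ℝ)+2)) ^ (u N) :=
  prod_range_succ _ _
lemma Cp_succ (N : ℕ) : Cp (N+1) = Cp N * ((4*(N:ℝ)+1)/(4*(N:ℝ)+3)) ^ (u N) :=
  prod_range_succ _ _
lemma Xp_succ (N : ℕ) (h : 1 ≤ N) :
    Xp (N+1) = Xp N * ((2*(N:ℝ))/(2*(N:ℝ)+1)) ^ (u N) :=
  Finset.prod_Ico_succ_top h _
lemma Ap_succ (N : ℕ) :
    Ap (N+1) = Ap N * ((2*((N:ℝ)+1)-1)/(2*((N:ℝ)+1)+1)) ^ (u (N+1)) := by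
  rw [Ap, Ap, Finset.prod_Icc_succ_top (by omega : 1 ≤ N+1)]
  push_cast
  rfl
lemma Bp_succ (N : ℕ) :
    Bp (N+1) = Bp N * ((4*((N:ℝ)+1)-1)/(4*((N:ℝ)+1)+1)) ^ (u (N+1)) := by
  rw [Bp, Bp, Finset.prod_Icc_succ_top (by omega : 1 ≤ N+1)]
  push_cast
  rfl

/-- Identity (c): `Cp N = Wp (2N) * Wp N`. -/
lemma Cp_eq (N : ℕ) : Cp N = Wp (2*N) * Wp N := by
  induction N with
  | zero => simp [Cp, Wp]
  | succ N ih =>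
    have h2 : 2*(N+1) = (2*N+1)+1 := by ring
    rw [Cp_succ, h2, Wp_succ, Wp_succ, Wp_succ, ih, u_two_mul, u_two_mul_add_one]
    push_cast
    have hN0 : (0:ℝ) ≤ (N:ℝ) := Nat.cast_nonneg N
    have d1 : (4*(N:ℝ)+1) ≠ 0 := by nlinarith
    have d2 : (4*(N:ℝ)+2) ≠ 0 := by nlinarith
    have d3 : (4*(N:ℝ)+3) ≠ 0 := by nlinarith
    have d4 : (4*(N:ℝ)+4) ≠ 0 := by nlinarith
    have d5 : (2*(N:ℝ)+1) ≠ 0 := by nlinarith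
    have d6 : (2*(N:ℝ)+2) ≠ 0 := by nlinarith
    rcases u_eq_or N with hu | hu <;> rw [hu] <;>
      simp only [zpow_one, zpow_neg, zpow_neg_one] <;>
      field_simp <;> ring

/-- Identity (★): Woods–Robbins style relation. -/
lemma star_id (M : ℕ) (hM : 1 ≤ M) : 2 * Xp (2*M) * Wp (2*M) * Wp M = Xp M := by
  induction M, hM using Nat.le_induction with
  | base =>
    have e0 : Xp 1 = 1 := by simp [Xp]
    have e1 : Xp 2 = Xp 1 * ((2*((1:ℕ):ℝ))/(2*((1:ℕ):ℝ)+1))^(u 1) := Xp_succ 1 le_rfl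
    have w0 : Wp 0 = 1 := by simp [Wp]
    have w1 : Wp 1 = Wp 0 * ((2*((0:ℕ):ℝ)+1)/(2*((0:ℕ):ℝ)+2))^(u 0) := Wp_succ 0
    have w2 : Wp 2 = Wp 1 * ((2*((1:ℕ):ℝ)+1)/(2*((1:ℕ):ℝ)+2))^(u 1) := Wp_succ 1
    rw [e1, w2, w1, w0, e0, u_zero, u_one]
    norm_num
  | succ M hM ih =>
    have h2 : 2*(M+1) = (2*M+1)+1 := by ring
    rw [h2, Xp_succ _ (by omega), Xp_succ _ (by omega), Wp_succ, Wp_succ,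
      Wp_succ, Xp_succ _ hM, ← ih, u_two_mul, u_two_mul_add_one]
    push_cast
    have hM1 : (1:ℝ) ≤ (M:ℝ) := by exact_mod_cast hM
    have d0 : (2*(M:ℝ)) ≠ 0 := by nlinarith
    have d0' : (4*(M:ℝ)) ≠ 0 := by nlinarith
    have d1 : (4*(M:ℝ)+1) ≠ 0 := by nlinarith
    have d2 : (4*(M:ℝ)+2) ≠ 0 := by nlinarith
    have d3 : (4*(M:ℝ)+3) ≠ 0 := by nlinarith
    have d4 : (4*(M:ℝ)+4) ≠ 0 := by nlinarith
    have d5 : (2*(M:ℝ)+1) ≠ 0 := by nlinarith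
    have d6 : (2*(M:ℝ)+2) ≠ 0 := by nlinarith
    rcases u_eq_or M with hu | hu <;> rw [hu] <;>
      simp only [zpow_one, zpow_neg, zpow_neg_one] <;>
      field_simp <;> ring

/-- Identity (d): `Ap (2M) * Cp M = Bp M`. -/
lemma AC_eq_B (M : ℕ) : Ap (2*M) * Cp M = Bp M := by
  induction M with
  | zero => simp [Ap, Cp, Bp]
  | succ M ih =>
    have h2 : 2*(M+1) = (2*M+1)+1 := by ring
    have hu2 : u (2*M+2) = u (M+1) := by
      have := u_two_mul (M+1); rw [show 2*(M+1) = 2*M+2 by ring] at this; exact this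
    rw [h2, Ap_succ, Ap_succ, Cp_succ, Bp_succ, ← ih, u_two_mul_add_one]
    rw [show (2*M+1)+1 = 2*M+2 by ring, hu2]
    push_cast
    have hM0 : (0:ℝ) ≤ (M:ℝ) := Nat.cast_nonneg M
    have e1 : (2*(2*(M:ℝ)+1)-1) ≠ 0 := by nlinarith
    have e2 : (2*(2*(M:ℝ)+1)+1) ≠ 0 := by nlinarith
    have e3 : (2*(2*(M:ℝ)+1+1)-1) ≠ 0 := by nlinarith
    have e4 : (2*(2*(M:ℝ)+1+1)+1) ≠ 0 := by nlinarith
    have e5 : (4*(M:ℝ)+1) ≠ 0 := by nlinarith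
    have e6 : (4*(M:ℝ)+3) ≠ 0 := by nlinarith
    have e7 : (4*((M:ℝ)+1)-1) ≠ 0 := by nlinarith
    have e8 : (4*((M:ℝ)+1)+1) ≠ 0 := by nlinarith
    have hfac : ∀ hu hv : ℤ, hu = u M → hv = u (M+1) → (hu = 1 ∨ hu = -1) → (hv = 1 ∨ hv = -1) →
      ((2*(2*(M:ℝ)+1)-1)/(2*(2*(M:ℝ)+1)+1)) ^ (-hu) *
      ((2*(2*(M:ℝ)+1+1)-1)/(2*(2*(M:ℝ)+1+1)+1)) ^ hv *
      ((4*(M:ℝ)+1)/(4*(M:ℝ)+3)) ^ hu = ((4*((M:ℝ)+1)-1)/(4*((M:ℝ)+1)+1)) ^ hv := by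
      rintro hu hv _ _ (rfl | rfl) (rfl | rfl) <;>
        simp only [zpow_one, zpow_neg, zpow_neg_one, neg_neg] <;>
        field_simp [e1, e2, e3, e4, e5, e6, e7, e8] <;> ring
    have key := hfac (u M) (u (M+1)) rfl rfl (u_eq_or M) (u_eq_or (M+1))
    linear_combination (Ap (2*M) * Cp M) * key

noncomputable def hw (n : ℕ) : ℝ := (2*(n:ℝ)+1)/(2*(n:ℝ)+2)
noncomputable def hx (n : ℕ) : ℝ := if n = 0 then 1 else (2*(n:ℝ))/(2*(n:ℝ)+1)
noncomputable def ha (n : ℕ) : ℝ := if n = 0 then 1 else (2*(n:ℝ)-1)/(2*(n:ℝ)+1)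
noncomputable def hb (n : ℕ) : ℝ := if n = 0 then 1 else (4*(n:ℝ)-1)/(4*(n:ℝ)+1)

lemma cast_ge_one {n : ℕ} (h : 1 ≤ n) : (1:ℝ) ≤ (n:ℝ) := by exact_mod_cast h

lemma hw_pos : ∀ n, 0 < hw n := by
  intro n; unfold hw; positivity
lemma hx_pos : ∀ n, 0 < hx n := by
  intro n; unfold hx
  rcases Nat.eq_zero_or_pos n with rfl | h
  · norm_num
  · rw [if_neg (by omega)]
    have := cast_ge_one h
    apply div_pos <;> linarith
lemma ha_pos : ∀ n, 0 < ha n := by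
  intro n; unfold ha
  rcases Nat.eq_zero_or_pos n with rfl | h
  · norm_num
  · rw [if_neg (by omega)]
    have := cast_ge_one h
    apply div_pos <;> linarith
lemma hb_pos : ∀ n, 0 < hb n := by
  intro n; unfold hb
  rcases Nat.eq_zero_or_pos n with rfl | h
  · norm_num
  · rw [if_neg (by omega)]
    have := cast_ge_one h
    apply div_pos <;> linarith

lemma tendsto_if_congr (h h' : ℕ → ℝ) (heq : ∀ n, 1 ≤ n → h n = h' n)
    (ht : Tendsto h' atTop (𝓝 1)) : Tendsto h atTop (𝓝 1) := by
  refine ht.congr' ?_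
  filter_upwards [eventually_ge_atTop 1] with n hn
  exact (heq n hn).symm

lemma hw_tendsto : Tendsto hw atTop (𝓝 1) := by
  have := lin_ratio 2 1 2 (by norm_num)
  exact this.congr (fun n => by unfold hw; norm_num)
lemma hx_tendsto : Tendsto hx atTop (𝓝 1) := by
  refine tendsto_if_congr hx (fun n : ℕ => (2*(n:ℝ)+0)/(2*(n:ℝ)+1)) ?_ ?_
  · intro n hn; unfold hx; rw [if_neg (by omega)]; norm_num
  · exact lin_ratio 2 0 1 (by norm_num)
lemma ha_tendsto : Tendsto ha atTop (𝓝 1) := by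
  refine tendsto_if_congr ha (fun n : ℕ => (2*(n:ℝ)+(-1))/(2*(n:ℝ)+1)) ?_ ?_
  · intro n hn; unfold ha; rw [if_neg (by omega)]; norm_num
    ring_nf
  · exact lin_ratio 2 (-1) 1 (by norm_num)
lemma hb_tendsto : Tendsto hb atTop (𝓝 1) := by
  refine tendsto_if_congr hb (fun n : ℕ => (4*(n:ℝ)+(-1))/(4*(n:ℝ)+1)) ?_ ?_
  · intro n hn; unfold hb; rw [if_neg (by omega)]; norm_num
    ring_nf
  · exact lin_ratio 4 (-1) 1 (by norm_num)

lemma hw_bound : ∀ m : ℕ, 1 ≤ m → |hw (2*m) / hw (2*m+1) - 1| ≤ 1/(2*(m:ℝ)^2) := by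
  intro m hm
  have hm1 := cast_ge_one hm
  have e : hw (2*m) / hw (2*m+1) - 1 = -2/((4*(m:ℝ)+2)*(4*(m:ℝ)+3)) := by
    unfold hw; push_cast; field_simp; ring
  rw [e, abs_div, abs_neg]
  rw [abs_of_nonneg (by norm_num : (0:ℝ) ≤ 2), abs_of_pos (by nlinarith)]
  rw [div_le_div_iff₀ (by nlinarith) (by nlinarith)]
  nlinarith
lemma hx_bound : ∀ m : ℕ, 1 ≤ m → |hx (2*m) / hx (2*m+1) - 1| ≤ 1/(2*(m:ℝ)^2) := by
  intro m hm
  have hm1 := cast_ge_one hm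
  have e : hx (2*m) / hx (2*m+1) - 1 = -2/((4*(m:ℝ)+1)*(4*(m:ℝ)+2)) := by
    unfold hx
    rw [if_neg (by omega), if_neg (by omega)]
    push_cast; field_simp; ring
  rw [e, abs_div, abs_neg]
  rw [abs_of_nonneg (by norm_num : (0:ℝ) ≤ 2), abs_of_pos (by nlinarith)]
  rw [div_le_div_iff₀ (by nlinarith) (by nlinarith)]
  nlinarith
lemma ha_bound : ∀ m : ℕ, 1 ≤ m → |ha (2*m) / ha (2*m+1) - 1| ≤ 1/(2*(m:ℝ)^2) := by
  intro m hm
  have hm1 := cast_ge_one hm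
  have e1 : ha (2*m) = (4*(m:ℝ)-1)/(4*(m:ℝ)+1) := by
    rw [ha, if_neg (by omega)]; push_cast; ring_nf
  have e2 : ha (2*m+1) = (4*(m:ℝ)+1)/(4*(m:ℝ)+3) := by
    rw [ha, if_neg (by omega)]; push_cast; ring_nf
  have d1 : (4*(m:ℝ)+1) ≠ 0 := by nlinarith
  have d3 : (4*(m:ℝ)+3) ≠ 0 := by nlinarith
  have e : ha (2*m) / ha (2*m+1) - 1 = -4/((4*(m:ℝ)+1)*(4*(m:ℝ)+1)) := by
    rw [e1, e2]; field_simp [d1, d3]; ring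
  rw [e, abs_div, abs_neg]
  rw [abs_of_nonneg (by norm_num : (0:ℝ) ≤ 4), abs_of_pos (by nlinarith)]
  rw [div_le_div_iff₀ (by nlinarith) (by nlinarith)]
  nlinarith
lemma hb_bound : ∀ m : ℕ, 1 ≤ m → |hb (2*m) / hb (2*m+1) - 1| ≤ 1/(2*(m:ℝ)^2) := by
  intro m hm
  have hm1 := cast_ge_one hm
  have e1 : hb (2*m) = (8*(m:ℝ)-1)/(8*(m:ℝ)+1) := by
    rw [hb, if_neg (by omega)]; push_cast; ring_nf
  have e2 : hb (2*m+1) = (8*(m:ℝ)+3)/(8*(m:ℝ)+5) := by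
    rw [hb, if_neg (by omega)]; push_cast; ring_nf
  have d1 : (8*(m:ℝ)+1) ≠ 0 := by nlinarith
  have d3 : (8*(m:ℝ)+3) ≠ 0 := by nlinarith
  have d5 : (8*(m:ℝ)+5) ≠ 0 := by nlinarith
  have e : hb (2*m) / hb (2*m+1) - 1 = -8/((8*(m:ℝ)+1)*(8*(m:ℝ)+3)) := by
    rw [e1, e2]; field_simp [d1, d3, d5]; ring
  rw [e, abs_div, abs_neg]
  rw [abs_of_nonneg (by norm_num : (0:ℝ) ≤ 8), abs_of_pos (by nlinarith)]
  rw [div_le_div_iff₀ (by nlinarith) (by nlinarith)]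
  nlinarith

lemma exists_W : ∃ L : ℝ, 0 < L ∧ Tendsto Wp atTop (𝓝 L) := by
  obtain ⟨L, hL, ht⟩ := core_conv hw hw_pos (log_tendsto_zero hw_tendsto)
    (summable_logdiff hw hw_pos hw_bound)
  exact ⟨L, hL, ht.congr (fun N => by unfold Wp hw; rfl)⟩

lemma range_prod_eq_Ico (h : ℕ → ℝ) (hzero : h 0 = 1) (N : ℕ) :
    ∏ n ∈ range N, h n ^ u n = ∏ n ∈ Ico 1 N, h n ^ u n := by
  rw [Finset.range_eq_Ico]
  rcases Nat.eq_zero_or_pos N with rfl | hN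
  · simp
  · rw [← Finset.prod_Ico_consecutive _ (Nat.zero_le 1) hN]
    have h0 : ∏ n ∈ Ico 0 1, h n ^ u n = 1 := by
      simp [hzero]
    rw [h0, one_mul]

lemma exists_X : ∃ L : ℝ, 0 < L ∧ Tendsto Xp atTop (𝓝 L) := by
  obtain ⟨L, hL, ht⟩ := core_conv hx hx_pos (log_tendsto_zero hx_tendsto)
    (summable_logdiff hx hx_pos hx_bound)
  refine ⟨L, hL, ht.congr (fun N => ?_)⟩
  rw [range_prod_eq_Ico hx (by simp [hx])]
  unfold Xp
  refine Finset.prod_congr rfl (fun n hn => ?_)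
  have hn1 : n ≠ 0 := by
    have := (Finset.mem_Ico.1 hn).1; omega
  rw [hx, if_neg hn1]

lemma exists_A : ∃ L : ℝ, 0 < L ∧ Tendsto Ap atTop (𝓝 L) := by
  obtain ⟨L, hL, ht⟩ := core_conv ha ha_pos (log_tendsto_zero ha_tendsto)
    (summable_logdiff ha ha_pos ha_bound)
  refine ⟨L, hL, ?_⟩
  have key : ∀ N, ∏ n ∈ range (N+1), ha n ^ u n = Ap N := by
    intro N
    unfold Ap
    rw [range_prod_eq_Ico ha (by simp [ha]), Finset.Ico_add_one_right_eq_Icc]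
    refine Finset.prod_congr rfl (fun n hn => ?_)
    have hn1 : n ≠ 0 := by
      have := (Finset.mem_Ico.1 hn).1; omega
    rw [ha, if_neg hn1]
  have := ht.comp (tendsto_add_atTop_nat 1)
  exact this.congr key

lemma exists_B : ∃ L : ℝ, 0 < L ∧ Tendsto Bp atTop (𝓝 L) := by
  obtain ⟨L, hL, ht⟩ := core_conv hb hb_pos (log_tendsto_zero hb_tendsto)
    (summable_logdiff hb hb_pos hb_bound)
  refine ⟨L, hL, ?_⟩
  have key : ∀ N, ∏ n ∈ range (N+1), hb n ^ u n = Bp N := by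
    intro N
    unfold Bp
    rw [range_prod_eq_Ico hb (by simp [hb]), Finset.Ico_add_one_right_eq_Icc]
    refine Finset.prod_congr rfl (fun n hn => ?_)
    have hn1 : n ≠ 0 := by
      have := (Finset.mem_Ico.1 hn).1; omega
    rw [hb, if_neg hn1]
  have := ht.comp (tendsto_add_atTop_nat 1)
  exact this.congr key

/-- The partial products `∏_{n=1}^{N} [((4n-1)(2n+1)) / ((4n+1)(2n-1))]^{u_n}`
converge to `1/2`. -/
theorem stmt_18 :
    Tendsto (fun N : ℕ => ∏ n ∈ Finset.Icc 1 N,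
      (((4 * (n : ℝ) - 1) * (2 * (n : ℝ) + 1)) /
        ((4 * (n : ℝ) + 1) * (2 * (n : ℝ) - 1))) ^ (u n)) atTop (𝓝 (1 / 2)) := by
  obtain ⟨ω, hω, hW⟩ := exists_W
  obtain ⟨ξ, hξ, hX⟩ := exists_X
  obtain ⟨α, hα, hA⟩ := exists_A
  obtain ⟨β, hβ, hB⟩ := exists_B
  have h2mul : Tendsto (fun M : ℕ => 2*M) atTop atTop :=
    tendsto_atTop_atTop.2 (fun b => ⟨b, fun n hn => by omega⟩)
  have hW2 : Tendsto (fun M : ℕ => Wp (2*M)) atTop (𝓝 ω) := hW.comp h2mul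
  have hX2 : Tendsto (fun M : ℕ => Xp (2*M)) atTop (𝓝 ξ) := hX.comp h2mul
  have hstar : Tendsto (fun M : ℕ => 2 * Xp (2*M) * Wp (2*M) * Wp M)
      atTop (𝓝 (2*ξ*ω*ω)) := ((hX2.const_mul 2).mul hW2).mul hW
  have hstar' : Tendsto (fun M : ℕ => 2 * Xp (2*M) * Wp (2*M) * Wp M)
      atTop (𝓝 ξ) := by
    refine hX.congr' ?_
    filter_upwards [eventually_ge_atTop 1] with M hM
    exact (star_id M hM).symm
  have hωsq : ω*ω = 1/2 := by
    have heq : 2*ξ*ω*ω = ξ := tendsto_nhds_unique hstar hstar'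
    have h0 : ξ * (2*(ω*ω) - 1) = 0 := by linear_combination heq
    rcases mul_eq_zero.1 h0 with h | h
    · exact absurd h (ne_of_gt hξ)
    · linarith
  have hC : Tendsto Cp atTop (𝓝 (1/2)) := by
    have h1 : Tendsto (fun N => Wp (2*N) * Wp N) atTop (𝓝 (ω*ω)) := hW2.mul hW
    rw [hωsq] at h1
    exact h1.congr (fun N => (Cp_eq N).symm)
  have hAC : Tendsto (fun M => Ap (2*M) * Cp M) atTop (𝓝 (α * (1/2))) :=
    (hA.comp h2mul).mul hC
  have hB' : Tendsto (fun M => Ap (2*M) * Cp M) atTop (𝓝 β) :=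
    hB.congr (fun M => (AC_eq_B M).symm)
  have hαβ : α * (1/2) = β := tendsto_nhds_unique hAC hB'
  have hP : Tendsto (fun N => Bp N / Ap N) atTop (𝓝 (β/α)) :=
    hB.div hA (ne_of_gt hα)
  have hba : β/α = 1/2 := by
    rw [← hαβ]
    field_simp
    try ring
  rw [hba] at hP
  refine hP.congr (fun N => ?_)
  rw [Bp, Ap, ← Finset.prod_div_distrib]
  refine (Finset.prod_congr rfl (fun n hn => ?_)).symm
  have hn1 : 1 ≤ n := (Finset.mem_Icc.1 hn).1
  have hc : (1:ℝ) ≤ (n:ℝ) := by exact_mod_cast hn1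
  rw [← div_zpow]
  congr 1
  have d1 : (4*(n:ℝ)+1) ≠ 0 := by nlinarith
  have d2 : (2*(n:ℝ)-1) ≠ 0 := by nlinarith
  have d3 : (2*(n:ℝ)+1) ≠ 0 := by nlinarith
  field_simp
  try ring
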